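/- Let Γ be a numerical semigroup with multiplicity m > 1. Then m·δ(Γ) = c(Γ) if and only if Γ = ⟨m, qm+1, qm+2, ..., qm+(m−1)⟩ for some integer q > 0, i.e., Γ = {0, m, 2m, ..., qm} ∪ {n ∈ ℕ : n ≥ qm}. -/

import Mathlib

/-- A numerical semigroup: a cofinite additive submonoid of ℕ. -/
def IsNumSgp (S : Set ℕ) : Prop :=
  0 ∈ S ∧ (∀ a ∈ S, ∀ b ∈ S, a + b ∈ S) ∧ Sᶜ.Finite

/-- Conductor: least `n` such that every `x ≥ n` lies in `S` (equals `F(S)+1`, and `0` for `ℕ`). -/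
noncomputable def nsConductor (S : Set ℕ) : ℕ :=
  sInf {n : ℕ | ∀ x, n ≤ x → x ∈ S}

/-- Delta invariant: number of elements of `S` strictly below the nsConductor. -/
noncomputable def nsDelta (S : Set ℕ) : ℕ :=
  {x | x ∈ S ∧ x < nsConductor S}.ncard

/-- Multiplicity: least nonzero element of `S`. -/
noncomputable def mult (S : Set ℕ) : ℕ := sInf (S \ {0})

/-- Apéry set of `S` with respect to `s`: elements `w ∈ S` with `w - s ∉ S`. -/
def apery (S : Set ℕ) (s : ℕ) : Set ℕ :=
  {w | w ∈ S ∧ ∀ v ∈ S, v + s ≠ w}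

/-- The type of `S`: number of maximal elements of `Ap(S, m) \ {0}` for the order
`s ⪯ t ↔ t - s ∈ S`. -/
noncomputable def typ (S : Set ℕ) : ℕ :=
  {w | w ∈ apery S (mult S) ∧ w ≠ 0 ∧
    ∀ w' ∈ apery S (mult S), w' ≠ 0 → (∃ u ∈ S, w + u = w') → w' = w}.ncard

/-- `A` is a minimal system of generators of `S`. -/
def MinGens (S : Set ℕ) (A : Finset ℕ) : Prop :=
  (AddSubmonoid.closure (A : Set ℕ) : Set ℕ) = S ∧
    ∀ B ⊆ A, (AddSubmonoid.closure (B : Set ℕ) : Set ℕ) = S → B = A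

/-- The Γ-semimodule generated by `{0, g}`. -/
def semimod (S : Set ℕ) (g : ℕ) : Set ℕ := S ∪ (fun x => g + x) '' S

theorem stmt6 (S : Set ℕ) (hS : IsNumSgp S) (hm : 1 < mult S) :
    mult S * nsDelta S = nsConductor S ↔
      ∃ q : ℕ, 0 < q ∧
        S = {n : ℕ | ∃ i ≤ q, n = i * mult S} ∪ {n : ℕ | q * mult S ≤ n} := by
  obtain ⟨h0, hadd, hfin⟩ := hS
  set m := mult S with hmdef
  set c := nsConductor S with hcdef
  -- the conductor works
  have hcne : {n : ℕ | ∀ x, n ≤ x → x ∈ S}.Nonempty := by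
    obtain ⟨N, hN⟩ := hfin.bddAbove
    refine ⟨N + 1, fun x hx => ?_⟩
    by_contra hxs
    exact absurd (hN hxs) (by omega)
  have hcmem : ∀ x, c ≤ x → x ∈ S := Nat.sInf_mem hcne
  -- multiples of m are in S
  have hSne : (S \ {0}).Nonempty := by
    have : S.Infinite := by
      have := hfin.infinite_compl
      rwa [compl_compl] at this
    exact (this.diff (Set.finite_singleton 0)).nonempty
  have hmS : m ∈ S := (Nat.sInf_mem hSne).1
  have hmul : ∀ i : ℕ, i * m ∈ S := by
    intro i
    induction i with
    | zero => simpa using h0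
    | succ n ih => have := hadd _ ih _ hmS; simpa [Nat.succ_mul] using this
  have h1 : (1 : ℕ) ∉ S := by
    intro h
    have h2 : m ≤ 1 := Nat.sInf_le (show (1:ℕ) ∈ S \ {0} from ⟨h, by simp⟩)
    omega
  have hc2 : 2 ≤ c := by
    by_contra h
    exact h1 (hcmem 1 (by omega))
  have hcm1 : c - 1 ∉ S := by
    intro h
    have hmem : c - 1 ∈ {n : ℕ | ∀ x, n ≤ x → x ∈ S} := by
      intro x hx
      rcases le_or_gt c x with hcx | hcx
      · exact hcmem x hcx
      · have : x = c - 1 := by omega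
        rwa [this]
    have h2 : c ≤ c - 1 := Nat.sInf_le hmem
    omega
  have hTfin : {x | x ∈ S ∧ x < c}.Finite :=
    (Set.finite_Iio c).subset (fun x hx => hx.2)
  have hdelta : nsDelta S = {x | x ∈ S ∧ x < c}.ncard := rfl
  have hinj : Function.Injective (fun i : ℕ => i * m) := by
    intro a b hab
    exact Nat.eq_of_mul_eq_mul_right (by omega) hab
  have hcardIio : ∀ k : ℕ, ((fun i : ℕ => i * m) '' Set.Iio k).ncard = k := by
    intro k
    rw [Set.ncard_image_of_injective _ hinj, ← Finset.coe_range,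
      Set.ncard_coe_finset, Finset.card_range]
  constructor
  · intro h
    set δ := nsDelta S with hδdef
    have hc : δ * m = c := by rw [mul_comm] at h; exact h
    have hδpos : 0 < δ := by
      rcases Nat.eq_zero_or_pos δ with h0' | h0'
      · rw [h0'] at h; omega
      · exact h0'
    refine ⟨δ, hδpos, ?_⟩
    have hMT : (fun i : ℕ => i * m) '' Set.Iio δ ⊆ {x | x ∈ S ∧ x < c} := by
      rintro x ⟨i, hi, rfl⟩
      refine ⟨hmul i, show i * m < c from ?_⟩
      have : i * m < δ * m := (mul_lt_mul_iff_of_pos_right (by omega)).mpr hi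
      omega
    have hMeq : (fun i : ℕ => i * m) '' Set.Iio δ = {x | x ∈ S ∧ x < c} := by
      apply Set.eq_of_subset_of_ncard_le hMT _ hTfin
      rw [hcardIio δ]
      exact le_of_eq hdelta
    ext x
    constructor
    · intro hx
      rcases lt_or_ge x c with hxc | hxc
      · have : x ∈ (fun i : ℕ => i * m) '' Set.Iio δ := by
          rw [hMeq]; exact ⟨hx, hxc⟩
        obtain ⟨i, hi, rfl⟩ := this
        exact Or.inl ⟨i, le_of_lt hi, rfl⟩
      · exact Or.inr (show δ * m ≤ x by omega)
    · rintro (⟨i, hi, rfl⟩ | hx)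
      · exact hmul i
      · exact hcmem x (by simp only [Set.mem_setOf_eq] at hx; omega)

  · rintro ⟨q, hq, hSeq⟩
    have hqm2 : 2 ≤ q * m := by
      calc 2 = 1 * 2 := by omega
      _ ≤ q * m := Nat.mul_le_mul hq hm
    have hqm1 : q * m - 1 ∉ S := by
      rw [hSeq]
      rintro (⟨i, hi, hx⟩ | hx)
      · rcases lt_or_eq_of_le hi with hi' | rfl
        · have : (i + 1) * m ≤ q * m := Nat.mul_le_mul_right m hi'
          have : i * m + m ≤ q * m := by rwa [add_mul, one_mul] at this
          omega
        · omega
      · simp only [Set.mem_setOf_eq] at hx; omega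
    have hceq : c = q * m := by
      apply le_antisymm
      · exact Nat.sInf_le (fun x hx => hSeq ▸ Or.inr hx)
      · by_contra hlt
        exact hqm1 (hcmem (q * m - 1) (by omega))
    have hTeq : {x | x ∈ S ∧ x < c} = (fun i : ℕ => i * m) '' Set.Iio q := by
      ext x
      constructor
      · rintro ⟨hxS, hxc⟩
        rw [hSeq] at hxS
        rcases hxS with ⟨i, hi, rfl⟩ | hx
        · refine ⟨i, ?_, rfl⟩
          rcases lt_or_eq_of_le hi with hi' | rfl
          · exact hi'
          · omega
        · simp only [Set.mem_setOf_eq] at hx; omega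
      · rintro ⟨i, hi, rfl⟩
        refine ⟨?_, show i * m < c from ?_⟩
        · rw [hSeq]; exact Or.inl ⟨i, le_of_lt hi, rfl⟩
        · have : i * m < q * m := (mul_lt_mul_iff_of_pos_right (by omega)).mpr hi
          omega
    have : nsDelta S = q := by rw [hdelta, hTeq, hcardIio]
    rw [this, hceq, mul_comm]
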